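/- Let W: ℝ^d → ℝ ∪ {∞} be lower semicontinuous, bounded below, locally integrable, even, with lim_{|x|→∞} W(x) = W_∞ ∈ ℝ ∪ {∞}. Suppose R_* > 0 is an upper bound of minimizer size for W (any minimizer of the interaction energy E is compactly supported, and any minimizer ρ with center of mass 0 has support contained in the closed ball B(0;R_*)), and suppose the LIC radius of W satisfies R_LIC[W] > R_*. Then the minimizer of E over probability measures is unique up to translation. -/

import Mathlib

open MeasureTheory Real Filter Topology Metric Set
open scoped ENNReal

noncomputable section

/-- Send an extended real to `ℝ≥0∞` (keeping `⊤`, truncating negatives to `0`). -/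
def erealToENNReal (x : EReal) : ℝ≥0∞ :=
  if x = ⊤ then ⊤ else ENNReal.ofReal x.toReal

/-- View an `ℝ≥0∞` number as an extended real. -/
def ennrealToEReal (x : ℝ≥0∞) : EReal :=
  if x = ⊤ then ⊤ else ((x.toReal : ℝ) : EReal)

/-- The interaction energy `E[ρ] = (1/2)∬ W(x-y) dρ(y) dρ(x)`, with values in the
extended reals, defined as the difference of the integrals of the positive and negative
parts of `W` (the potentials considered are bounded below, so the negative part is finite). -/
def interactionEnergy {d : ℕ} (W : EuclideanSpace ℝ (Fin d) → EReal)
    (ρ : Measure (EuclideanSpace ℝ (Fin d))) : EReal :=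
  (((2:ℝ)⁻¹ : ℝ) : EReal) *
    (ennrealToEReal (∫⁻ p, erealToENNReal (W (p.1 - p.2)) ∂(ρ.prod ρ))
      - ennrealToEReal (∫⁻ p, erealToENNReal (-(W (p.1 - p.2))) ∂(ρ.prod ρ)))

/-- `ρ` is a minimizer of the interaction energy among probability measures. -/
def IsEnergyMinimizer {d : ℕ} (W : EuclideanSpace ℝ (Fin d) → EReal)
    (ρ : Measure (EuclideanSpace ℝ (Fin d))) : Prop :=
  IsProbabilityMeasure ρ ∧
    ∀ ρ' : Measure (EuclideanSpace ℝ (Fin d)), IsProbabilityMeasure ρ' →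
      interactionEnergy W ρ ≤ interactionEnergy W ρ'

/-- The linear interpolation `(1-t)ρ₀ + tρ₁`. -/
def lininterp {d : ℕ} (ρ₀ ρ₁ : Measure (EuclideanSpace ℝ (Fin d))) (t : ℝ) :
    Measure (EuclideanSpace ℝ (Fin d)) :=
  ENNReal.ofReal (1 - t) • ρ₀ + ENNReal.ofReal t • ρ₁

/-- The linear interpolation convexity property of `W` holds within radius `R`:
for any two distinct probability measures of finite energy supported in `closedBall 0 R`
with center of mass `0`, the energy is strictly convex along the linear interpolation. -/
def LICWithin {d : ℕ} (W : EuclideanSpace ℝ (Fin d) → EReal) (R : ℝ) : Prop :=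
  ∀ ρ₀ ρ₁ : Measure (EuclideanSpace ℝ (Fin d)),
    IsProbabilityMeasure ρ₀ → IsProbabilityMeasure ρ₁ → ρ₀ ≠ ρ₁ →
    ρ₀ (closedBall (0 : EuclideanSpace ℝ (Fin d)) R)ᶜ = 0 →
    ρ₁ (closedBall (0 : EuclideanSpace ℝ (Fin d)) R)ᶜ = 0 →
    interactionEnergy W ρ₀ < ⊤ → interactionEnergy W ρ₁ < ⊤ →
    (∫ x, x ∂ρ₀) = 0 → (∫ x, x ∂ρ₁) = 0 →
    ∀ t₁ t₂ θ : ℝ, t₁ ∈ Icc (0:ℝ) 1 → t₂ ∈ Icc (0:ℝ) 1 → t₁ ≠ t₂ → θ ∈ Ioo (0:ℝ) 1 →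
      interactionEnergy W (lininterp ρ₀ ρ₁ (θ * t₁ + (1 - θ) * t₂)) <
        ((θ : ℝ) : EReal) * interactionEnergy W (lininterp ρ₀ ρ₁ t₁) +
          (((1 - θ) : ℝ) : EReal) * interactionEnergy W (lininterp ρ₀ ρ₁ t₂)


namespace UniqAux

variable {d : ℕ}

local notation "E" => EuclideanSpace ℝ (Fin d)

lemma measurable_erealToENNReal : Measurable erealToENNReal := by
  unfold erealToENNReal
  exact Measurable.ite (measurableSet_eq) measurable_const
    (ENNReal.measurable_ofReal.comp measurable_ereal_toReal)

lemma erealToENNReal_mono : Monotone erealToENNReal := by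
  intro x y h
  unfold erealToENNReal
  rcases eq_or_ne y ⊤ with hy | hy
  · simp [hy]
  · rw [if_neg hy, if_neg (by rintro rfl; exact hy (top_le_iff.1 h))]
    rcases eq_or_ne x ⊥ with hx | hx
    · simp [hx]
    · exact ENNReal.ofReal_le_ofReal (EReal.toReal_le_toReal h hx hy)

lemma negpart_ne_top (W : E → EReal) (m : ℝ) (hm : ∀ x, (m : EReal) ≤ W x)
    (μ : Measure E) [IsProbabilityMeasure μ] :
    (∫⁻ p : E × E, erealToENNReal (-(W (p.1 - p.2))) ∂(μ.prod μ)) ≠ ⊤ := by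
  have hbd : ∀ p : E × E, erealToENNReal (-(W (p.1 - p.2))) ≤ ENNReal.ofReal (-m) := by
    intro p
    have h1 : -(W (p.1 - p.2)) ≤ ((-m : ℝ) : EReal) := by
      rw [EReal.coe_neg]
      exact EReal.neg_le_neg_iff.2 (hm _)
    calc erealToENNReal (-(W (p.1 - p.2))) ≤ erealToENNReal ((-m : ℝ) : EReal) :=
          erealToENNReal_mono h1
      _ = ENNReal.ofReal (-m) := by
          unfold erealToENNReal
          rw [if_neg (EReal.coe_ne_top _), EReal.toReal_coe]
  have : (∫⁻ p : E × E, erealToENNReal (-(W (p.1 - p.2))) ∂(μ.prod μ))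
      ≤ ENNReal.ofReal (-m) := by
    calc _ ≤ ∫⁻ _ : E × E, ENNReal.ofReal (-m) ∂(μ.prod μ) := lintegral_mono hbd
      _ = ENNReal.ofReal (-m) := by simp [lintegral_const]
  exact ne_top_of_le_ne_top ENNReal.ofReal_ne_top this

/-- A minimizer's energy is either `⊤` or a real number (never `⊥`). -/
lemma energy_cases (W : E → EReal) (m : ℝ) (hm : ∀ x, (m : EReal) ≤ W x)
    (μ : Measure E) [IsProbabilityMeasure μ] :
    interactionEnergy W μ = ⊤ ∨ ∃ r : ℝ, interactionEnergy W μ = (r : EReal) := by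
  have hB := negpart_ne_top W m hm μ
  set bi := ∫⁻ p : E × E, erealToENNReal (-(W (p.1 - p.2))) ∂(μ.prod μ) with hbi
  have hBe : ennrealToEReal bi = ((bi.toReal : ℝ) : EReal) := by
    unfold ennrealToEReal; rw [if_neg hB]
  unfold interactionEnergy
  rcases eq_or_ne (∫⁻ p : E × E, erealToENNReal (W (p.1 - p.2)) ∂(μ.prod μ)) ⊤ with hA | hA
  · left
    rw [← hbi, hBe, hA]
    have : ennrealToEReal ⊤ = ⊤ := by unfold ennrealToEReal; rw [if_pos rfl]
    rw [this, EReal.top_sub_coe]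
    exact EReal.coe_mul_top_of_pos (by norm_num)
  · right
    refine ⟨2⁻¹ * ((∫⁻ p : E × E, erealToENNReal (W (p.1 - p.2)) ∂(μ.prod μ)).toReal
        - bi.toReal), ?_⟩
    rw [← hbi, hBe]
    have : ennrealToEReal (∫⁻ p : E × E, erealToENNReal (W (p.1 - p.2)) ∂(μ.prod μ))
        = (((∫⁻ p : E × E, erealToENNReal (W (p.1 - p.2)) ∂(μ.prod μ)).toReal : ℝ) : EReal) := by
      unfold ennrealToEReal; rw [if_neg hA]
    rw [this, ← EReal.coe_sub, ← EReal.coe_mul]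

/-- Translation invariance of the interaction energy. -/
lemma energy_map_add (W : E → EReal) (hW : Measurable W)
    (μ : Measure E) [SFinite μ] (v : E) :
    interactionEnergy W (μ.map (fun x => x + v)) = interactionEnergy W μ := by
  have hT : Measurable (fun x : E => x + v) := measurable_add_const v
  have hprod : (μ.map (fun x : E => x + v)).prod (μ.map (fun x : E => x + v))
      = (μ.prod μ).map (Prod.map (fun x : E => x + v) (fun x : E => x + v)) :=
    Measure.map_prod_map μ μ hT hT
  have h1 : ∀ g : EReal → ℝ≥0∞, Measurable g →
      (∫⁻ p : E × E, g (W (p.1 - p.2))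
          ∂((μ.map (fun x : E => x + v)).prod (μ.map (fun x : E => x + v))))
        = ∫⁻ p : E × E, g (W (p.1 - p.2)) ∂(μ.prod μ) := by
    intro g hg
    have hmeas : Measurable (fun p : E × E => g (W (p.1 - p.2))) :=
      hg.comp (hW.comp (measurable_fst.sub measurable_snd))
    rw [hprod, lintegral_map hmeas (hT.prodMap hT)]
    congr 1
    funext p
    simp [Prod.map, add_sub_add_right_eq_sub]
  unfold interactionEnergy
  rw [h1 erealToENNReal measurable_erealToENNReal,
    h1 (fun x => erealToENNReal (-x))
      (measurable_erealToENNReal.comp (continuous_neg.measurable))]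

lemma integrable_id_of_compact (μ : Measure E) [IsFiniteMeasure μ]
    {K : Set E} (hK : IsCompact K) (h0 : μ Kᶜ = 0) :
    Integrable (fun x : E => x) μ := by
  obtain ⟨C, hC⟩ := isBounded_iff_forall_norm_le.1 hK.isBounded
  refine Integrable.mono' (integrable_const C) aestronglyMeasurable_id ?_
  rw [ae_iff]
  refine measure_mono_null ?_ h0
  intro x hx hxK
  exact hx (hC x hxK)

lemma integral_id_map_add (μ : Measure E) [IsProbabilityMeasure μ]
    (h : Integrable (fun x : E => x) μ) (v : E) :
    (∫ x, x ∂(μ.map (fun x : E => x + v))) = (∫ x, x ∂μ) + v := by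
  rw [integral_map (f := fun x : E => x) (measurable_add_const v).aemeasurable
    measurable_id.aestronglyMeasurable]
  rw [integral_add h (integrable_const v), integral_const]
  simp

lemma exists_noncompact_prob (hd : 0 < d) :
    ∃ μ : Measure E, IsProbabilityMeasure μ ∧ ∀ K : Set E, IsCompact K → μ Kᶜ ≠ 0 := by
  set e : E := EuclideanSpace.single (⟨0, hd⟩ : Fin d) (1 : ℝ) with he_def
  have he : ‖e‖ = 1 := by simp [he_def, EuclideanSpace.norm_single]
  set x : ℕ → E := fun n => (n : ℝ) • e with hx_def
  have hxn : ∀ n : ℕ, ‖x n‖ = n := by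
    intro n; rw [hx_def]; simp [norm_smul, he]
  refine ⟨Measure.sum (fun n : ℕ => ((2 : ℝ≥0∞)⁻¹ ^ (n + 1)) • Measure.dirac (x n)), ⟨?_⟩, ?_⟩
  · rw [Measure.sum_apply _ MeasurableSet.univ]
    simp only [Measure.smul_apply, smul_eq_mul, measure_univ, mul_one]
    simp_rw [pow_succ']
    rw [ENNReal.tsum_mul_left, ENNReal.tsum_geometric, ENNReal.one_sub_inv_two, inv_inv]
    exact ENNReal.inv_mul_cancel two_ne_zero ENNReal.ofNat_ne_top
  · intro K hK h0
    obtain ⟨C, hC⟩ := isBounded_iff_forall_norm_le.1 hK.isBounded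
    set n := ⌈C⌉₊ + 1 with hn
    have hxnK : x n ∉ K := by
      intro h
      have h1 := hC _ h
      rw [hxn n] at h1
      have : (n : ℝ) ≤ ⌈C⌉₊ := le_trans h1 (Nat.le_ceil C)
      rw [hn] at this
      push_cast at this
      linarith
    have hle := Measure.le_iff'.1 (Measure.le_sum
      (fun k : ℕ => ((2 : ℝ≥0∞)⁻¹ ^ (k + 1)) • Measure.dirac (x k)) n) Kᶜ
    rw [h0] at hle
    rw [Measure.smul_apply, smul_eq_mul, Measure.dirac_apply_of_mem (mem_compl hxnK), mul_one] at hle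
    have : ((2 : ℝ≥0∞)⁻¹ ^ (n + 1)) ≠ 0 :=
      pow_ne_zero _ (ENNReal.inv_ne_zero.2 ENNReal.ofNat_ne_top)
    exact this (le_antisymm hle zero_le)

end UniqAux

/-- If `R_*` is an upper bound of minimizer size for `W` and the LIC radius of `W`
exceeds `R_*` (witnessed by some `R > R_*` at which the LIC property within radius `R`
holds), then the energy minimizer is unique up to translation. -/
theorem uniqueness_of_minimizer_from_LIC_radius
    {d : ℕ} (hd : 0 < d) (W : EuclideanSpace ℝ (Fin d) → EReal)
    (heven : ∀ x, W (-x) = W x)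
    (hlsc : LowerSemicontinuous W)
    (hbdd : ∃ m : ℝ, ∀ x, (m : EReal) ≤ W x)
    (hloc : LocallyIntegrable (fun x => (W x).toReal) volume)
    (Winf : EReal) (hWinfbot : Winf ≠ ⊥)
    (hWlim : Tendsto W (Bornology.cobounded (EuclideanSpace ℝ (Fin d))) (nhds Winf))
    (hexists : ∃ ρ : Measure (EuclideanSpace ℝ (Fin d)), IsEnergyMinimizer W ρ)
    (Rstar : ℝ) (hRstar : 0 < Rstar)
    (hcompact : ∀ ρ : Measure (EuclideanSpace ℝ (Fin d)), IsEnergyMinimizer W ρ →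
      ∃ K : Set (EuclideanSpace ℝ (Fin d)), IsCompact K ∧ ρ Kᶜ = 0)
    (hsize : ∀ ρ : Measure (EuclideanSpace ℝ (Fin d)), IsEnergyMinimizer W ρ →
      (∫ x, x ∂ρ) = 0 → ρ (closedBall (0 : EuclideanSpace ℝ (Fin d)) Rstar)ᶜ = 0)
    (R : ℝ) (hRR : Rstar < R) (hLIC : LICWithin W R) :
    ∀ ρ₀ ρ₁ : Measure (EuclideanSpace ℝ (Fin d)),
      IsEnergyMinimizer W ρ₀ → IsEnergyMinimizer W ρ₁ →
      ∃ v : EuclideanSpace ℝ (Fin d), ρ₁ = ρ₀.map (fun x => x + v) := by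
  intro ρ₀ ρ₁ h₀ h₁
  obtain ⟨m, hm⟩ := hbdd
  have Wmeas : Measurable W := hlsc.measurable
  have hp₀ : IsProbabilityMeasure ρ₀ := h₀.1
  have hp₁ : IsProbabilityMeasure ρ₁ := h₁.1
  obtain ⟨K₀, hK₀c, hK₀⟩ := hcompact ρ₀ h₀
  obtain ⟨K₁, hK₁c, hK₁⟩ := hcompact ρ₁ h₁
  have hint₀ : Integrable (fun x => x) ρ₀ := UniqAux.integrable_id_of_compact ρ₀ hK₀c hK₀
  have hint₁ : Integrable (fun x => x) ρ₁ := UniqAux.integrable_id_of_compact ρ₁ hK₁c hK₁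
  set v₀ := ∫ x, x ∂ρ₀ with hv₀
  set v₁ := ∫ x, x ∂ρ₁ with hv₁
  set σ₀ := ρ₀.map (fun x => x + (-v₀)) with hσ₀
  set σ₁ := ρ₁.map (fun x => x + (-v₁)) with hσ₁
  have hq₀ : IsProbabilityMeasure σ₀ :=
    Measure.isProbabilityMeasure_map (measurable_add_const _).aemeasurable
  have hq₁ : IsProbabilityMeasure σ₁ :=
    Measure.isProbabilityMeasure_map (measurable_add_const _).aemeasurable
  have hE₀ : interactionEnergy W σ₀ = interactionEnergy W ρ₀ :=
    UniqAux.energy_map_add W Wmeas ρ₀ (-v₀)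
  have hE₁ : interactionEnergy W σ₁ = interactionEnergy W ρ₁ :=
    UniqAux.energy_map_add W Wmeas ρ₁ (-v₁)
  have hmin₀ : IsEnergyMinimizer W σ₀ := ⟨hq₀, fun ρ' hρ' => hE₀ ▸ h₀.2 ρ' hρ'⟩
  have hmin₁ : IsEnergyMinimizer W σ₁ := ⟨hq₁, fun ρ' hρ' => hE₁ ▸ h₁.2 ρ' hρ'⟩
  have hbary₀ : (∫ x, x ∂σ₀) = 0 := by
    rw [hσ₀, UniqAux.integral_id_map_add ρ₀ hint₀ (-v₀), ← hv₀, add_neg_cancel]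
  have hbary₁ : (∫ x, x ∂σ₁) = 0 := by
    rw [hσ₁, UniqAux.integral_id_map_add ρ₁ hint₁ (-v₁), ← hv₁, add_neg_cancel]
  have hsupp₀ : σ₀ (closedBall (0 : EuclideanSpace ℝ (Fin d)) R)ᶜ = 0 :=
    measure_mono_null (compl_subset_compl.2 (closedBall_subset_closedBall hRR.le))
      (hsize σ₀ hmin₀ hbary₀)
  have hsupp₁ : σ₁ (closedBall (0 : EuclideanSpace ℝ (Fin d)) R)ᶜ = 0 :=
    measure_mono_null (compl_subset_compl.2 (closedBall_subset_closedBall hRR.le))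
      (hsize σ₁ hmin₁ hbary₁)
  obtain ⟨μnc, hμncp, hμnc⟩ := UniqAux.exists_noncompact_prob (d := d) hd
  have hfin : ∀ σ : Measure (EuclideanSpace ℝ (Fin d)), IsEnergyMinimizer W σ →
      interactionEnergy W σ < ⊤ := by
    intro σ hσ
    rcases lt_or_eq_of_le (le_top : interactionEnergy W σ ≤ ⊤) with h | htop
    · exact h
    · exfalso
      have hall : IsEnergyMinimizer W μnc := by
        refine ⟨hμncp, fun ρ' hρ' => ?_⟩
        have h1 := hσ.2 ρ' hρ'
        rw [htop] at h1
        rw [top_le_iff.1 h1]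
        exact le_top
      obtain ⟨K, hKc, hK0⟩ := hcompact μnc hall
      exact hμnc K hKc hK0
  by_cases hne : σ₀ = σ₁
  · refine ⟨v₁ - v₀, ?_⟩
    have h2 : σ₀.map (fun x => x + v₁) = σ₁.map (fun x => x + v₁) := by rw [hne]
    rw [hσ₀, hσ₁, Measure.map_map (measurable_add_const v₁) (measurable_add_const (-v₀)),
        Measure.map_map (measurable_add_const v₁) (measurable_add_const (-v₁))] at h2
    have e1 : ((fun x => x + v₁) ∘ (fun x : EuclideanSpace ℝ (Fin d) => x + -v₀))
        = (fun x : EuclideanSpace ℝ (Fin d) => x + (v₁ - v₀)) := by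
      funext x; simp [Function.comp]; abel
    have e2 : ((fun x => x + v₁) ∘ (fun x : EuclideanSpace ℝ (Fin d) => x + -v₁)) = id := by
      funext x; simp [Function.comp]
    rw [e1, e2, Measure.map_id] at h2
    exact h2.symm
  · exfalso
    have hE01 : interactionEnergy W σ₀ = interactionEnergy W σ₁ :=
      le_antisymm (hmin₀.2 σ₁ hq₁) (hmin₁.2 σ₀ hq₀)
    have hlt := hLIC σ₀ σ₁ hq₀ hq₁ hne hsupp₀ hsupp₁ (hfin _ hmin₀) (hfin _ hmin₁)
      hbary₀ hbary₁ 0 1 2⁻¹ ⟨le_refl 0, zero_le_one⟩ ⟨zero_le_one, le_refl 1⟩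
      zero_ne_one (by norm_num)
    have l0 : lininterp σ₀ σ₁ 0 = σ₀ := by
      simp [lininterp]
    have l1 : lininterp σ₀ σ₁ 1 = σ₁ := by
      simp [lininterp]
    have harg : (2⁻¹ : ℝ) * 0 + (1 - 2⁻¹) * 1 = 2⁻¹ := by norm_num
    rw [harg, l0, l1, ← hE01] at hlt
    have hmid : IsProbabilityMeasure (lininterp σ₀ σ₁ 2⁻¹) := by
      constructor
      simp only [lininterp, Measure.add_apply, Measure.smul_apply, smul_eq_mul,
        measure_univ, mul_one]
      rw [← ENNReal.ofReal_add (by norm_num) (by norm_num)]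
      norm_num
    have hge := hmin₀.2 _ hmid
    rcases UniqAux.energy_cases W m hm σ₀ with htop | ⟨r, hr⟩
    · exact absurd htop (ne_of_lt (hfin _ hmin₀))
    · rw [hr] at hlt hge
      have heq : ((2⁻¹ : ℝ) : EReal) * (r : EReal) + (((1 - 2⁻¹ : ℝ)) : EReal) * (r : EReal)
          = (r : EReal) := by
        rw [← EReal.coe_mul, ← EReal.coe_mul, ← EReal.coe_add]
        congr 1
        ring
      rw [heq] at hlt
      exact absurd (lt_of_le_of_lt hge hlt) (lt_irrefl _)

end
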